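/- Let S be a finite nonempty type, P : S → PMF S a Markov chain transition function, and (μ_s)_{s∈S} a trajectory measure family for (S, P). Then for every s ∈ S, for μ_s-almost every trajectory ω : ℕ → S there exists N ∈ ℕ such that: (i) for all n ≥ N, ω n lies in the SCC of ω N (i.e., ω n and ω N are mutually reachable); (ii) the SCC of ω N is terminal; and (iii) for every state c in the SCC of ω N, the set {n | ω n = c} is infinite. -/

import Mathlib

open scoped ENNReal

/-- A trajectory measure family for a Markov chain with transition
probabilities `P` (values in `ℝ≥0∞`). -/
def IsTrajectoryMeasureFamily {X : Type*} [MeasurableSpace X] [DecidableEq X]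
    (P : X → X → ℝ≥0∞) (μ : X → MeasureTheory.Measure (ℕ → X)) : Prop :=
  ∀ x : X, MeasureTheory.IsProbabilityMeasure (μ x) ∧
    ∀ (n : ℕ) (f : ℕ → X),
      μ x {ω | ∀ k ≤ n, ω k = f k} =
        if f 0 = x then ∏ k ∈ Finset.range n, P (f k) (f (k + 1)) else 0

/-- The strongly connected component of a vertex `v`. -/
def SCC {V : Type*} (E : V → V → Prop) (v : V) : Set V :=
  {w | Relation.ReflTransGen E v w ∧ Relation.ReflTransGen E w v}

namespace AeTrajAux

variable {S : Type*} [DecidableEq S]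

def shf (f : ℕ → S) : ℕ → S := fun k => f (k + 1)

def Dd (x y : S) : ℕ → ℕ → ℕ → (ℕ → S) → Prop
  | 0, _, _, _ => True
  | _ + 1, _, 0, _ => False
  | j + 1, 0, n + 1, f =>
      if f 0 = x then f 1 ≠ y ∧ Dd x y j 0 n (shf f) else Dd x y (j + 1) 0 n (shf f)
  | j + 1, m + 1, n + 1, f => Dd x y (j + 1) m n (shf f)

variable {x y : S}

lemma Dd_congr : ∀ (n j m : ℕ) (f g : ℕ → S), (∀ k ≤ n, f k = g k) →
    Dd x y j m n f → Dd x y j m n g := by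
  intro n
  induction n with
  | zero =>
    intro j m f g _ h
    match j with
    | 0 => trivial
    | j + 1 => exact absurd h (by simp [Dd])
  | succ n ih =>
    intro j m f g hfg h
    have hfg' : ∀ k ≤ n, shf f k = shf g k := fun k hk => hfg (k + 1) (by omega)
    match j, m with
    | 0, _ => trivial
    | j + 1, 0 =>
      by_cases hx : f 0 = x
      · have hgx : g 0 = x := by rw [← hfg 0 (by omega)]; exact hx
        simp only [Dd, hx, hgx, if_true] at h ⊢
        rw [← hfg 1 (by omega)]
        exact ⟨h.1, ih j 0 _ _ hfg' h.2⟩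
      · have hgx : ¬ g 0 = x := by rw [← hfg 0 (by omega)]; exact hx
        simp only [Dd, hx, hgx, if_false] at h ⊢
        exact ih (j + 1) 0 _ _ hfg' h
    | j + 1, m + 1 =>
      simp only [Dd] at h ⊢
      exact ih (j + 1) m _ _ hfg' h

lemma Dd_mono_succ : ∀ (n j m : ℕ) (f : ℕ → S), Dd x y j m n f → Dd x y j m (n + 1) f := by
  intro n
  induction n with
  | zero =>
    intro j m f h
    match j with
    | 0 => trivial
    | j + 1 => exact absurd h (by simp [Dd])
  | succ n ih =>
    intro j m f h
    match j, m with
    | 0, _ => trivial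
    | j + 1, 0 =>
      by_cases hx : f 0 = x
      · simp only [Dd, hx, if_true] at h ⊢
        exact ⟨h.1, ih j 0 _ h.2⟩
      · simp only [Dd, hx, if_false] at h ⊢
        exact ih (j + 1) 0 _ h
    | j + 1, m + 1 =>
      simp only [Dd] at h ⊢
      exact ih (j + 1) m _ h

lemma Dd_mono {n n' j m : ℕ} {f : ℕ → S} (h : Dd x y j m n f) (hn : n ≤ n') :
    Dd x y j m n' f := by
  induction hn with
  | refl => exact h
  | step _ ih => exact Dd_mono_succ _ _ _ _ ih

/-- Coverage: if all visits to `x` in the window are "bad" (not followed by `y`)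
and there are at least `j` visits, then `Dd` holds. -/
lemma Dd_of_visits : ∀ (n j m : ℕ) (f : ℕ → S),
    (∀ k, m ≤ k → k + 1 ≤ n → f k = x → f (k + 1) ≠ y) →
    j ≤ ((Finset.Ico m n).filter (fun k => f k = x)).card →
    Dd x y j m n f := by
  intro n
  induction n with
  | zero =>
    intro j m f _ hcard
    simp at hcard
    subst hcard
    trivial
  | succ n ih =>
    intro j m f hbad hcard
    match j, m with
    | 0, _ => trivial
    | j + 1, m + 1 =>
      simp only [Dd]
      apply ih (j + 1) m (shf f)
      · intro k hk hk' hx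
        exact hbad (k + 1) (by omega) (by omega) hx
      · refine le_trans hcard (le_of_eq ?_)
        apply Finset.card_bij (fun k _ => k - 1)
        · intro a ha
          simp only [Finset.mem_filter, Finset.mem_Ico] at ha ⊢
          refine ⟨⟨by omega, by omega⟩, ?_⟩
          have : a - 1 + 1 = a := by omega
          simpa [shf, this] using ha.2
        · intro a ha b hb hab
          simp only [Finset.mem_filter, Finset.mem_Ico] at ha hb
          omega
        · intro b hb
          simp only [Finset.mem_filter, Finset.mem_Ico] at hb ⊢
          exact ⟨b + 1, ⟨⟨by omega, by omega⟩, hb.2⟩, by omega⟩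
    | j + 1, 0 =>
      simp only [Dd]
      by_cases hx : f 0 = x
      · simp only [hx, if_true]
        refine ⟨hbad 0 (by omega) (by omega) hx, ?_⟩
        apply ih j 0 (shf f)
        · intro k hk hk' hxk
          exact hbad (k + 1) (by omega) (by omega) hxk
        · have h0 : 0 ∈ (Finset.Ico 0 (n + 1)).filter (fun k => f k = x) := by
            simp [hx]
          have hcard2 : ((Finset.Ico 0 (n + 1)).filter (fun k => f k = x)).card ≤
              ((Finset.Ico 0 n).filter (fun k => shf f k = x)).card + 1 := by
            have : (Finset.Ico 0 (n + 1)).filter (fun k => f k = x) ⊆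
                insert 0 (((Finset.Ico 0 n).filter (fun k => shf f k = x)).image (· + 1)) := by
              intro a ha
              simp only [Finset.mem_filter, Finset.mem_Ico] at ha
              rcases Nat.eq_zero_or_pos a with rfl | hpos
              · simp
              · simp only [Finset.mem_insert, Finset.mem_image, Finset.mem_filter,
                  Finset.mem_Ico]
                right
                exact ⟨a - 1, ⟨⟨by omega, by omega⟩, by
                  have : a - 1 + 1 = a := by omega
                  simpa [shf, this] using ha.2⟩, by omega⟩
            calc ((Finset.Ico 0 (n + 1)).filter (fun k => f k = x)).card
                ≤ _ := Finset.card_le_card this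
              _ ≤ _ := by
                  refine le_trans (Finset.card_insert_le _ _) ?_
                  simp [Finset.card_image_of_injective _ (add_left_injective 1)]
          omega
      · simp only [hx, if_false]
        apply ih (j + 1) 0 (shf f)
        · intro k hk hk' hxk
          exact hbad (k + 1) (by omega) (by omega) hxk
        · refine le_trans hcard (le_of_eq ?_)
          apply Finset.card_bij (fun k _ => k - 1)
          · intro a ha
            simp only [Finset.mem_filter, Finset.mem_Ico] at ha ⊢
            have hane : a ≠ 0 := by rintro rfl; exact hx ha.2
            refine ⟨⟨by omega, by omega⟩, ?_⟩
            have : a - 1 + 1 = a := by omega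
            simpa [shf, this] using ha.2
          · intro a ha b hb hab
            simp only [Finset.mem_filter, Finset.mem_Ico] at ha hb
            have : a ≠ 0 := by rintro rfl; exact hx ha.2
            have : b ≠ 0 := by rintro rfl; exact hx hb.2
            omega
          · intro b hb
            simp only [Finset.mem_filter, Finset.mem_Ico] at hb ⊢
            exact ⟨b + 1, ⟨⟨by omega, by omega⟩, hb.2⟩, by omega⟩


open scoped Classical

def ext (n : ℕ) (f : Fin (n + 1) → S) : ℕ → S := fun k => f ⟨min k n, by omega⟩

lemma ext_zero (n : ℕ) (f : Fin (n + 1) → S) : ext n f 0 = f 0 := by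
  simp [ext]

noncomputable def wgt (P : S → S → ℝ≥0∞) (n : ℕ) (f : Fin (n + 1) → S) : ℝ≥0∞ :=
  ∏ k ∈ Finset.range n, P (ext n f k) (ext n f (k + 1))

lemma ext_cons_zero (n : ℕ) (b : S) (t : Fin (n + 1) → S) :
    ext (n + 1) (Fin.cons b t) 0 = b := by
  simp [ext]

lemma shf_ext_cons (n : ℕ) (b : S) (t : Fin (n + 1) → S) :
    shf (ext (n + 1) (Fin.cons b t)) = ext n t := by
  funext k
  have h1 : min (k + 1) (n + 1) = min k n + 1 := by omega
  simp only [shf, ext, h1]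
  have key : ∀ (h : min k n + 1 < n + 1 + 1) (h2 : min k n < n + 1),
      (Fin.cons b t : Fin (n + 2) → S) ⟨min k n + 1, h⟩ = t ⟨min k n, h2⟩ := by
    intro h h2
    exact Fin.cons_succ (α := fun _ : Fin (n + 2) => S) b t ⟨min k n, h2⟩
  exact key _ _

lemma wgt_cons (P : S → S → ℝ≥0∞) (n : ℕ) (b : S) (t : Fin (n + 1) → S) :
    wgt P (n + 1) (Fin.cons b t) = P b (t 0) * wgt P n t := by
  have hsh := shf_ext_cons n b t
  have hsh' : ∀ k, ext (n + 1) (Fin.cons b t) (k + 1) = ext n t k := fun k =>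
    congrFun hsh k
  unfold wgt
  rw [Finset.prod_range_succ']
  simp only [hsh', ext_cons_zero, ext_zero, Fin.cons_zero]
  rw [mul_comm]

lemma sum_ite_congr {α M : Type*} [Fintype α] [AddCommMonoid M] {C C' : α → Prop}
    {i1 : DecidablePred C} {i2 : DecidablePred C'} {w w' : α → M}
    (h : ∀ t, C t ↔ C' t) (hw : ∀ t, w t = w' t) :
    (∑ t : α, if C t then w t else 0) = ∑ t : α, if C' t then w' t else 0 :=
  Finset.sum_congr rfl fun t _ => if_congr (h t) (hw t) rfl

lemma fiber_sum (n : ℕ) [Fintype S] (g : S → ℝ≥0∞) (w : (Fin (n + 1) → S) → ℝ≥0∞)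
    (C : (Fin (n + 1) → S) → Prop) [DecidablePred C] :
    ∑ t : Fin (n + 1) → S, (if C t then g (t 0) * w t else 0)
      = ∑ b : S, g b * ∑ t : Fin (n + 1) → S, (if t 0 = b ∧ C t then w t else 0) := by
  simp_rw [Finset.mul_sum, mul_ite, mul_zero]
  rw [Finset.sum_comm]
  apply Finset.sum_congr rfl
  intro t _
  by_cases hC : C t
  · rw [if_pos hC, Finset.sum_eq_single (t 0)
      (fun b _ hb => if_neg (fun h1 => hb h1.1.symm)) (by simp),
      if_pos (⟨rfl, hC⟩ : t 0 = t 0 ∧ C t)]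
  · rw [if_neg hC]
    apply (Finset.sum_eq_zero _).symm
    intro b _
    exact if_neg (fun h1 => hC h1.2)

variable [Fintype S]

lemma key_bound (P : S → S → ℝ≥0∞) (hP : ∀ a, ∑ b, P a b = 1) (x y : S)
    (hp1 : P x y ≤ 1) :
    ∀ (n : ℕ) (j m : ℕ) (a : S),
      ∑ f : Fin (n + 1) → S,
          (if f 0 = a ∧ Dd x y j m n (ext n f) then wgt P n f else 0)
        ≤ (1 - P x y) ^ j := by
  intro n
  induction n with
  | zero =>
    intro j m a
    match j with
    | 0 =>
      simp only [pow_zero]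
      have heq := Fintype.sum_equiv (Equiv.funUnique (Fin 1) S)
        (fun f : Fin 1 → S => if f 0 = a ∧ Dd x y 0 m 0 (ext 0 f) then wgt P 0 f else 0)
        (fun b : S => if b = a then 1 else 0) ?_
      · rw [heq]
        simp
      · intro f
        simp [Dd, wgt, Equiv.funUnique]
    | j + 1 =>
      have hno : ∀ f : Fin 1 → S, ¬ (f 0 = a ∧ Dd x y (j + 1) m 0 (ext 0 f)) := by
        intro f h
        exact (by simp [Dd] : ¬ Dd x y (j + 1) m 0 (ext 0 f)) h.2
      calc ∑ f : Fin 1 → S, (if f 0 = a ∧ Dd x y (j + 1) m 0 (ext 0 f) then wgt P 0 f else 0)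
          = 0 := Finset.sum_eq_zero fun f _ => if_neg (hno f)
        _ ≤ _ := zero_le
  | succ n ih =>
    intro j m a
    have hre : ∑ f : Fin (n + 2) → S,
        (if f 0 = a ∧ Dd x y j m (n + 1) (ext (n + 1) f) then wgt P (n + 1) f else 0)
        = ∑ b : S, ∑ t : Fin (n + 1) → S,
          (if b = a ∧ Dd x y j m (n + 1) (ext (n + 1) (Fin.cons b t)) then
            P b (t 0) * wgt P n t else 0) := by
      rw [← Equiv.sum_comp (Fin.consEquiv (fun _ : Fin (n + 2) => S))
        (fun f => if f 0 = a ∧ Dd x y j m (n + 1) (ext (n + 1) f) then wgt P (n + 1) f else 0),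
        Fintype.sum_prod_type]
      apply Finset.sum_congr rfl
      intro b _
      apply Finset.sum_congr rfl
      intro t _
      show (if (Fin.cons b t : Fin (n + 2) → S) 0 = a ∧
          Dd x y j m (n + 1) (ext (n + 1) (Fin.cons b t)) then
            wgt P (n + 1) (Fin.cons b t) else 0) = _
      rw [wgt_cons]
      exact if_congr (by rw [Fin.cons_zero]) rfl rfl
    rw [hre, Finset.sum_eq_single a (fun b _ hb =>
      Finset.sum_eq_zero fun t _ => if_neg (fun hc => hb hc.1)) (by simp)]
    -- now goal : ∑ t, if a = a ∧ Dd x y j m (n+1) (ext (n+1) (cons a t)) then P a (t 0) * wgt else 0 ≤ _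
    have hshf : ∀ t : Fin (n + 1) → S, shf (ext (n + 1) (Fin.cons a t)) = ext n t :=
      shf_ext_cons n a
    have h0 : ∀ t : Fin (n + 1) → S, ext (n + 1) (Fin.cons a t) 0 = a := ext_cons_zero n a
    have h1 : ∀ t : Fin (n + 1) → S, ext (n + 1) (Fin.cons a t) 1 = t 0 := by
      intro t
      rw [show ext (n + 1) (Fin.cons a t) 1 = shf (ext (n + 1) (Fin.cons a t)) 0 from rfl,
        hshf, ext_zero]
    match j, m with
    | 0, m =>
      calc (∑ t : Fin (n + 1) → S, if a = a ∧ Dd x y 0 m (n + 1) (ext (n + 1) (Fin.cons a t))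
            then P a (t 0) * wgt P n t else 0)
          = ∑ t : Fin (n + 1) → S, (if (fun _ : Fin (n + 1) → S => True) t
              then P a (t 0) * wgt P n t else 0) :=
            sum_ite_congr (fun t => by simp [Dd]) (fun t => rfl)
        _ = ∑ b : S, P a b * ∑ t : Fin (n + 1) → S, (if t 0 = b ∧ True then wgt P n t else 0) :=
            fiber_sum n (fun b => P a b) (wgt P n) _
        _ ≤ ∑ b : S, P a b * 1 := by
            apply Finset.sum_le_sum
            intro b _
            refine mul_le_mul_right ?_ _
            refine le_trans (le_of_eq (sum_ite_congr (fun t => ?_) (fun t => rfl)))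
              (le_trans (ih 0 0 b) (by rw [pow_zero]))
            simp [Dd]
        _ = 1 := by simp [hP a]
        _ = (1 - P x y) ^ 0 := by rw [pow_zero]
    | j + 1, m + 1 =>
      calc (∑ t : Fin (n + 1) → S, if a = a ∧
              Dd x y (j + 1) (m + 1) (n + 1) (ext (n + 1) (Fin.cons a t))
            then P a (t 0) * wgt P n t else 0)
          = ∑ t : Fin (n + 1) → S, (if (fun t : Fin (n + 1) → S => Dd x y (j + 1) m n (ext n t)) t
              then P a (t 0) * wgt P n t else 0) := by
            refine sum_ite_congr (fun t => ?_) (fun t => rfl)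
            rw [show Dd x y (j + 1) (m + 1) (n + 1) (ext (n + 1) (Fin.cons a t))
                = Dd x y (j + 1) m n (shf (ext (n + 1) (Fin.cons a t))) from rfl, hshf]
            simp
        _ = ∑ b : S, P a b * ∑ t : Fin (n + 1) → S,
              (if t 0 = b ∧ Dd x y (j + 1) m n (ext n t) then wgt P n t else 0) :=
            fiber_sum n (fun b => P a b) (wgt P n) _
        _ ≤ ∑ b : S, P a b * (1 - P x y) ^ (j + 1) := by
            apply Finset.sum_le_sum
            intro b _
            refine mul_le_mul_right ?_ _
            exact le_trans (le_of_eq (sum_ite_congr (fun t => Iff.rfl) (fun t => rfl)))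
              (ih (j + 1) m b)
        _ = (1 - P x y) ^ (j + 1) := by rw [← Finset.sum_mul, hP a, one_mul]
    | j + 1, 0 =>
      by_cases hax : a = x
      · have hdd : ∀ t : Fin (n + 1) → S,
            Dd x y (j + 1) 0 (n + 1) (ext (n + 1) (Fin.cons a t))
              ↔ (t 0 ≠ y ∧ Dd x y j 0 n (ext n t)) := by
          intro t
          rw [show Dd x y (j + 1) 0 (n + 1) (ext (n + 1) (Fin.cons a t))
              = if ext (n + 1) (Fin.cons a t) 0 = x then
                  (ext (n + 1) (Fin.cons a t) 1 ≠ y ∧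
                    Dd x y j 0 n (shf (ext (n + 1) (Fin.cons a t))))
                else Dd x y (j + 1) 0 n (shf (ext (n + 1) (Fin.cons a t))) from rfl,
            h0 t, h1 t, hshf, if_pos hax]
        calc (∑ t : Fin (n + 1) → S, if a = a ∧
                Dd x y (j + 1) 0 (n + 1) (ext (n + 1) (Fin.cons a t))
              then P a (t 0) * wgt P n t else 0)
            = ∑ t : Fin (n + 1) → S,
                (if (fun t : Fin (n + 1) → S => t 0 ≠ y ∧ Dd x y j 0 n (ext n t)) t
                then P a (t 0) * wgt P n t else 0) := by
              refine sum_ite_congr (fun t => ?_) (fun t => rfl)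
              rw [← hdd t]
              simp
          _ = ∑ b : S, P a b * ∑ t : Fin (n + 1) → S,
                (if t 0 = b ∧ t 0 ≠ y ∧ Dd x y j 0 n (ext n t) then wgt P n t else 0) :=
              fiber_sum n (fun b => P a b) (wgt P n) _
          _ ≤ ∑ b : S, (if b = y then 0 else P a b * (1 - P x y) ^ j) := by
              apply Finset.sum_le_sum
              intro b _
              by_cases hb : b = y
              · subst hb
                rw [if_pos rfl]
                have hz : ∑ t : Fin (n + 1) → S,
                    (if t 0 = b ∧ t 0 ≠ b ∧ Dd x b j 0 n (ext n t) then wgt P n t else 0) = 0 :=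
                  Finset.sum_eq_zero fun t _ => if_neg (fun hc => hc.2.1 hc.1)
                rw [hz, mul_zero]
              · rw [if_neg hb]
                refine mul_le_mul_right ?_ _
                refine le_trans (le_of_eq (sum_ite_congr (fun t => ?_) (fun t => rfl))) (ih j 0 b)
                constructor
                · rintro ⟨u1, _, u3⟩; exact ⟨u1, u3⟩
                · rintro ⟨u1, u3⟩; exact ⟨u1, u1 ▸ hb, u3⟩
          _ = (∑ b ∈ Finset.univ.erase y, P a b) * (1 - P x y) ^ j := by
              rw [Finset.sum_mul, ← Finset.filter_ne' Finset.univ y, Finset.sum_filter]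
              apply Finset.sum_congr rfl
              intro b _
              by_cases hb : b = y <;> simp [hb]
          _ ≤ (1 - P x y) ^ (j + 1) := by
              have hsum1 : ∑ b ∈ Finset.univ.erase y, P a b + P a y = 1 := by
                rw [Finset.sum_erase_add _ _ (Finset.mem_univ y), hP a]
              rw [hax] at hsum1
              have hsum : (∑ b ∈ Finset.univ.erase y, P x b) = 1 - P x y :=
                ENNReal.eq_sub_of_add_eq (lt_of_le_of_lt hp1 ENNReal.one_lt_top).ne hsum1
              rw [hax, hsum, pow_succ, mul_comm]
      · have hdd : ∀ t : Fin (n + 1) → S,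
            Dd x y (j + 1) 0 (n + 1) (ext (n + 1) (Fin.cons a t))
              ↔ Dd x y (j + 1) 0 n (ext n t) := by
          intro t
          rw [show Dd x y (j + 1) 0 (n + 1) (ext (n + 1) (Fin.cons a t))
              = if ext (n + 1) (Fin.cons a t) 0 = x then
                  (ext (n + 1) (Fin.cons a t) 1 ≠ y ∧
                    Dd x y j 0 n (shf (ext (n + 1) (Fin.cons a t))))
                else Dd x y (j + 1) 0 n (shf (ext (n + 1) (Fin.cons a t))) from rfl,
            h0 t, hshf, if_neg hax]
        calc (∑ t : Fin (n + 1) → S, if a = a ∧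
                Dd x y (j + 1) 0 (n + 1) (ext (n + 1) (Fin.cons a t))
              then P a (t 0) * wgt P n t else 0)
            = ∑ t : Fin (n + 1) → S,
                (if (fun t : Fin (n + 1) → S => Dd x y (j + 1) 0 n (ext n t)) t
                then P a (t 0) * wgt P n t else 0) := by
              refine sum_ite_congr (fun t => ?_) (fun t => rfl)
              rw [← hdd t]
              simp
          _ = ∑ b : S, P a b * ∑ t : Fin (n + 1) → S,
                (if t 0 = b ∧ Dd x y (j + 1) 0 n (ext n t) then wgt P n t else 0) :=
              fiber_sum n (fun b => P a b) (wgt P n) _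
          _ ≤ ∑ b : S, P a b * (1 - P x y) ^ (j + 1) := by
              apply Finset.sum_le_sum
              intro b _
              refine mul_le_mul_right ?_ _
              exact le_trans (le_of_eq (sum_ite_congr (fun t => Iff.rfl) (fun t => rfl)))
                (ih (j + 1) 0 b)
          _ = (1 - P x y) ^ (j + 1) := by rw [← Finset.sum_mul, hP a, one_mul]


open MeasureTheory

section Meas

variable [MeasurableSpace S] (hms : ∀ A : Set S, MeasurableSet A)

include hms in
lemma cyl_measurable (g : ℕ → S) (n : ℕ) :
    MeasurableSet {ω : ℕ → S | ∀ k ≤ n, ω k = g k} := by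
  have heq : {ω : ℕ → S | ∀ k ≤ n, ω k = g k}
      = ⋂ k ∈ Set.Iic n, (fun ω : ℕ → S => ω k) ⁻¹' {g k} := by
    ext ω
    simp [Set.mem_iInter, Set.mem_Iic]
  rw [heq]
  exact MeasurableSet.biInter (Set.to_countable _) fun k _ =>
    (measurable_pi_apply k) (hms {g k})

lemma coord_set_eq (n : ℕ) (A : (ℕ → S) → Prop)
    (hA : ∀ f g : ℕ → S, (∀ k ≤ n, f k = g k) → A f → A g) :
    {ω : ℕ → S | A ω} =
      ⋃ f ∈ Finset.univ.filter (fun f : Fin (n + 1) → S => A (ext n f)),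
        {ω : ℕ → S | ∀ k ≤ n, ω k = ext n f k} := by
  ext ω
  simp only [Set.mem_iUnion, Finset.mem_filter, Finset.mem_univ, true_and, Set.mem_setOf_eq]
  constructor
  · intro hω
    refine ⟨fun i => ω i, hA ω _ (fun k hk => ?_) hω, fun k hk => ?_⟩
    · simp [ext, Nat.min_eq_left hk]
    · simp [ext, Nat.min_eq_left hk]
  · rintro ⟨f, hAf, hcylf⟩
    exact hA (ext n f) ω (fun k hk => (hcylf k hk).symm) hAf

include hms in
lemma coord_measurable (n : ℕ) (A : (ℕ → S) → Prop)
    (hA : ∀ f g : ℕ → S, (∀ k ≤ n, f k = g k) → A f → A g) :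
    MeasurableSet {ω : ℕ → S | A ω} := by
  rw [coord_set_eq n A hA]
  exact Finset.measurableSet_biUnion _ fun f _ => cyl_measurable hms _ n

include hms in
lemma meas_coord (μ : Measure (ℕ → S)) (n : ℕ) (A : (ℕ → S) → Prop)
    (hA : ∀ f g : ℕ → S, (∀ k ≤ n, f k = g k) → A f → A g) :
    μ {ω : ℕ → S | A ω} = ∑ f : Fin (n + 1) → S,
      (if A (ext n f) then μ {ω : ℕ → S | ∀ k ≤ n, ω k = ext n f k} else 0) := by
  rw [coord_set_eq n A hA, measure_biUnion_finset ?hd (fun f _ => cyl_measurable hms _ n),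
    Finset.sum_filter]
  case hd =>
    intro f hf g hg hfg
    refine Set.disjoint_left.mpr ?_
    intro ω h1 h2
    apply hfg
    funext i
    have hi : (i : ℕ) ≤ n := by omega
    have e1 : ω i = ext n f i := h1 i hi
    have e2 : ω i = ext n g i := h2 i hi
    have hfi : ext n f i = f i := by
      show f ⟨min i n, _⟩ = f i
      congr 1
      exact Fin.ext (by simp [Nat.min_eq_left hi])
    have hgi : ext n g i = g i := by
      show g ⟨min i n, _⟩ = g i
      congr 1
      exact Fin.ext (by simp [Nat.min_eq_left hi])
    rw [← hfi, ← e1, e2, hgi]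

variable (P : S → S → ℝ≥0∞) (μ : Measure (ℕ → S)) (s : S)
variable (hcyl : ∀ (n : ℕ) (f : ℕ → S),
  μ {ω : ℕ → S | ∀ k ≤ n, ω k = f k} =
    if f 0 = s then ∏ k ∈ Finset.range n, P (f k) (f (k + 1)) else 0)

include hms hcyl in
lemma null_bad_edge (a b : S) (hab : P a b = 0) (k : ℕ) :
    μ {ω : ℕ → S | ω k = a ∧ ω (k + 1) = b} = 0 := by
  have hA : ∀ f g : ℕ → S, (∀ i ≤ k + 1, f i = g i) →
      (f k = a ∧ f (k + 1) = b) → (g k = a ∧ g (k + 1) = b) := by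
    intro f g h hf
    exact ⟨by rw [← h k (by omega)]; exact hf.1, by rw [← h (k + 1) le_rfl]; exact hf.2⟩
  rw [meas_coord hms μ (k + 1) _ hA]
  apply Finset.sum_eq_zero
  intro f _
  by_cases hAf : ext (k + 1) f k = a ∧ ext (k + 1) f (k + 1) = b
  · rw [if_pos hAf, hcyl]
    split
    · apply Finset.prod_eq_zero (Finset.self_mem_range_succ k)
      rw [hAf.1, hAf.2, hab]
    · rfl
  · rw [if_neg hAf]

include hms hcyl in
lemma bound_D (hP : ∀ a, ∑ b, P a b = 1) (x y : S) (hp1 : P x y ≤ 1) (j m n : ℕ) :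
    μ {ω : ℕ → S | Dd x y j m n ω} ≤ (1 - P x y) ^ j := by
  rw [meas_coord hms μ n _ (Dd_congr n j m)]
  refine le_trans (le_of_eq (Finset.sum_congr rfl fun f _ => ?_)) (key_bound P hP x y hp1 n j m s)
  rw [show {ω : ℕ → S | ∀ k ≤ n, ω k = ext n f k} = {ω | ∀ k ≤ n, ω k = (ext n f) k} from rfl,
    hcyl n (ext n f), ext_zero]
  by_cases hD : Dd x y j m n (ext n f) <;> by_cases hs : f 0 = s
  · rw [if_pos hD, if_pos hs, if_pos ⟨hs, hD⟩]
    rfl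
  · rw [if_pos hD, if_neg hs, if_neg (fun h => hs h.1)]
  · rw [if_neg hD, if_neg (fun h => hD h.2)]
  · rw [if_neg hD, if_neg (fun h => hD h.2)]

include hms hcyl in
lemma null_D (hP : ∀ a, ∑ b, P a b = 1) (x y : S) (hp : 0 < P x y) (hp1 : P x y ≤ 1) (M : ℕ) :
    μ (⋂ j : ℕ, ⋃ n : ℕ, {ω : ℕ → S | Dd x y j M n ω}) = 0 := by
  have hb : ∀ j : ℕ, μ (⋃ n : ℕ, {ω : ℕ → S | Dd x y j M n ω}) ≤ (1 - P x y) ^ j := by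
    intro j
    have hmon : Monotone (fun n => {ω : ℕ → S | Dd x y j M n ω}) := by
      intro n n' hn ω hω
      exact Dd_mono hω hn
    rw [hmon.directed_le.measure_iUnion]
    exact iSup_le fun n => bound_D hms P μ s hcyl hP x y hp1 j M n
  have hball : ∀ j : ℕ, μ (⋂ j : ℕ, ⋃ n : ℕ, {ω : ℕ → S | Dd x y j M n ω}) ≤ (1 - P x y) ^ j :=
    fun j => le_trans (measure_mono (Set.iInter_subset _ j)) (hb j)
  have hlt : (1 - P x y) < 1 :=
    ENNReal.sub_lt_self ENNReal.one_ne_top one_ne_zero hp.ne'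
  have htend : Filter.Tendsto (fun j : ℕ => (1 - P x y) ^ j) Filter.atTop (nhds 0) :=
    ENNReal.tendsto_pow_atTop_nhds_zero_of_lt_one hlt
  exact le_antisymm (ge_of_tendsto' htend hball) zero_le

end Meas

section Determ

variable [Fintype S]

lemma trajectory_conclusion (P : S → S → ℝ≥0∞) (ω : ℕ → S)
    (h1 : ∀ k : ℕ, 0 < P (ω k) (ω (k + 1)))
    (h2 : ∀ x y : S, 0 < P x y → ∀ M : ℕ, ∃ j : ℕ, ∀ n : ℕ, ¬ Dd x y j M n ω) :
    ∃ N : ℕ, (∀ n ≥ N, ω n ∈ SCC (fun a b => 0 < P a b) (ω N)) ∧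
      (∀ a ∈ SCC (fun a b => 0 < P a b) (ω N), ∀ b,
        Relation.ReflTransGen (fun a b => 0 < P a b) a b →
          b ∈ SCC (fun a b => 0 < P a b) (ω N)) ∧
      (∀ c ∈ SCC (fun a b => 0 < P a b) (ω N), {n | ω n = c}.Infinite) := by
  classical
  set E : S → S → Prop := fun a b => 0 < P a b with hE
  have hreach : ∀ m n : ℕ, m ≤ n → Relation.ReflTransGen E (ω m) (ω n) := by
    intro m n hmn
    induction n, hmn using Nat.le_induction with
    | base => exact Relation.ReflTransGen.refl
    | succ n hmn ih => exact ih.tail (h1 n)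
  set T : Set S := {c | {n | ω n = c}.Infinite} with hT
  have hclose1 : ∀ c ∈ T, ∀ b, 0 < P c b → b ∈ T := by
    intro c hc b hcb
    by_contra hbT
    have hbfin : {n | ω n = b}.Finite := Set.not_infinite.mp hbT
    obtain ⟨M0, hM0⟩ := hbfin.bddAbove
    obtain ⟨j, hj⟩ := h2 c b hcb (M0 + 1)
    have hj0 : j ≠ 0 := by
      rintro rfl
      exact hj 0 trivial
    have hIinf : {k | M0 + 1 ≤ k ∧ ω k = c}.Infinite := by
      refine Set.Infinite.mono ?_ (Set.Infinite.diff hc (Set.finite_lt_nat (M0 + 1)))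
      intro k hk
      exact ⟨by simpa using Nat.not_lt.mp hk.2, hk.1⟩
    obtain ⟨t, htsub, htcard⟩ := hIinf.exists_subset_card_eq j
    have htne : t.Nonempty := by
      rw [← Finset.card_pos, htcard]
      omega
    set n := t.max' htne + 1 with hn
    have hDd : Dd c b j (M0 + 1) n ω := by
      apply Dd_of_visits
      · intro k hk hk' hxk heq
        have hmem : (k + 1) ∈ {n | ω n = b} := heq
        have := hM0 hmem
        omega
      · rw [← htcard]
        apply Finset.card_le_card
        intro k hk
        have hks := htsub hk
        simp only [Finset.mem_filter, Finset.mem_Ico]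
        exact ⟨⟨hks.1, by have := t.le_max' k hk; omega⟩, hks.2⟩
    exact hj n hDd
  have hcloseR : ∀ c ∈ T, ∀ b, Relation.ReflTransGen E c b → b ∈ T := by
    intro c hc b hrtg
    induction hrtg with
    | refl => exact hc
    | tail _ he ih => exact hclose1 _ ih _ he
  have hmut : ∀ c ∈ T, ∀ d ∈ T, Relation.ReflTransGen E c d := by
    intro c hc d hd
    obtain ⟨m, hm⟩ := hc.nonempty
    obtain ⟨n, hn⟩ := (hd.diff (Set.finite_lt_nat m)).nonempty
    have hmn : m ≤ n := by
      have := hn.2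
      simp only [Set.mem_setOf_eq] at this
      omega
    rw [← hm, ← hn.1]
    exact hreach m n hmn
  have hTne : ∃ c, c ∈ T := by
    by_contra hco
    push_neg at hco
    have he : (Set.univ : Set ℕ) = ⋃ c : S, {n | ω n = c} := by
      ext n; simp
    have hfin : (Set.univ : Set ℕ).Finite := by
      rw [he]
      exact Set.finite_iUnion fun c => Set.not_infinite.mp (hco c)
    exact Set.infinite_univ hfin
  have hVfin : {n | ω n ∉ T}.Finite := by
    have he : {n | ω n ∉ T} = ⋃ c : S, {n | ω n = c ∧ c ∉ T} := by
      ext n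
      simp only [Set.mem_setOf_eq, Set.mem_iUnion]
      constructor
      · intro h
        exact ⟨ω n, rfl, h⟩
      · rintro ⟨c, rfl, h⟩
        exact h
    rw [he]
    refine Set.finite_iUnion fun c => ?_
    by_cases hc : c ∈ T
    · have : {n | ω n = c ∧ c ∉ T} = ∅ := by
        ext n; simp [hc]
      rw [this]
      exact Set.finite_empty
    · refine Set.Finite.subset (Set.not_infinite.mp hc) ?_
      intro n hn
      exact hn.1
  obtain ⟨N0, hN0⟩ := hVfin.bddAbove
  have hNin : ∀ n, N0 + 1 ≤ n → ω n ∈ T := by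
    intro n hn
    by_contra h
    have := hN0 (Set.mem_setOf_eq ▸ h)
    omega
  have hωN : ω (N0 + 1) ∈ T := hNin _ le_rfl
  have hSCC : SCC E (ω (N0 + 1)) = T := by
    ext w
    constructor
    · rintro ⟨h1w, _⟩
      exact hcloseR _ hωN _ h1w
    · intro hw
      exact ⟨hmut _ hωN _ hw, hmut _ hw _ hωN⟩
  refine ⟨N0 + 1, ?_, ?_, ?_⟩
  · intro n hn
    rw [hSCC]
    exact hNin n hn
  · intro a ha b hab
    rw [hSCC] at ha ⊢
    exact hcloseR _ ha _ hab
  · intro c hc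
    rw [hSCC] at hc
    exact hc

end Determ

end AeTrajAux

/-- almost every trajectory of a finite Markov chain eventually
enters a terminal SCC, stays in it forever, and visits each of its states
infinitely often. -/
theorem ae_trajectory_terminal_scc {S : Type*} [Fintype S] [Nonempty S]
    [DecidableEq S] (P : S → PMF S) :
    letI : MeasurableSpace S := ⊤
    ∀ μ : S → MeasureTheory.Measure (ℕ → S),
      IsTrajectoryMeasureFamily (fun a b => P a b) μ →
      ∀ s : S, ∀ᵐ ω ∂ (μ s), ∃ N : ℕ,
        (∀ n ≥ N, ω n ∈ SCC (fun a b => 0 < P a b) (ω N)) ∧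
        (∀ a ∈ SCC (fun a b => 0 < P a b) (ω N), ∀ b,
          Relation.ReflTransGen (fun a b => 0 < P a b) a b →
            b ∈ SCC (fun a b => 0 < P a b) (ω N)) ∧
        (∀ c ∈ SCC (fun a b => 0 < P a b) (ω N), {n | ω n = c}.Infinite) := by
  intro μ hμ s
  classical
  letI : MeasurableSpace S := ⊤
  have hms : ∀ A : Set S, MeasurableSet A := fun A => MeasurableSpace.measurableSet_top
  have hP : ∀ a : S, ∑ b : S, (P a : S → ℝ≥0∞) b = 1 := by
    intro a
    rw [← tsum_fintype (L := SummationFilter.unconditional _)]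
    exact (P a).tsum_coe
  have hcyl := (hμ s).2
  set Bad1 : Set (ℕ → S) := ⋃ (k : ℕ) (a : S) (b : S) (_ : (P a : S → ℝ≥0∞) b = 0),
    {ω : ℕ → S | ω k = a ∧ ω (k + 1) = b} with hBad1def
  set Bad2 : Set (ℕ → S) := ⋃ (x : S) (y : S) (_ : 0 < (P x : S → ℝ≥0∞) y) (M : ℕ),
    ⋂ (j : ℕ), ⋃ (n : ℕ), {ω : ℕ → S | AeTrajAux.Dd x y j M n ω} with hBad2def
  have hBad1 : μ s Bad1 = 0 := by
    refine MeasureTheory.measure_iUnion_null fun k => MeasureTheory.measure_iUnion_null fun a =>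
      MeasureTheory.measure_iUnion_null fun b => MeasureTheory.measure_iUnion_null fun hab => ?_
    exact AeTrajAux.null_bad_edge hms (fun a b => (P a : S → ℝ≥0∞) b) (μ s) s hcyl a b hab k
  have hBad2 : μ s Bad2 = 0 := by
    refine MeasureTheory.measure_iUnion_null fun x => MeasureTheory.measure_iUnion_null fun y =>
      MeasureTheory.measure_iUnion_null fun hxy => MeasureTheory.measure_iUnion_null fun M => ?_
    exact AeTrajAux.null_D hms (fun a b => (P a : S → ℝ≥0∞) b) (μ s) s hcyl hP x y hxy
      (PMF.coe_le_one _ _) M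
  rw [MeasureTheory.ae_iff]
  refine MeasureTheory.measure_mono_null ?_
    (MeasureTheory.measure_union_null hBad1 hBad2)
  intro ω hω
  by_contra hnB
  apply hω
  simp only [Set.mem_union] at hnB
  push_neg at hnB
  have h1 : ∀ k : ℕ, 0 < (P (ω k) : S → ℝ≥0∞) (ω (k + 1)) := by
    intro k
    rcases eq_or_lt_of_le (zero_le : 0 ≤ (P (ω k) : S → ℝ≥0∞) (ω (k + 1))) with h | h
    · exfalso
      apply hnB.1
      refine Set.mem_iUnion.mpr ⟨k, Set.mem_iUnion.mpr ⟨ω k, Set.mem_iUnion.mpr ⟨ω (k + 1),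
        Set.mem_iUnion.mpr ⟨h.symm, ⟨rfl, rfl⟩⟩⟩⟩⟩
    · exact h
  have h2 : ∀ x y : S, 0 < (P x : S → ℝ≥0∞) y → ∀ M : ℕ, ∃ j : ℕ, ∀ n : ℕ,
      ¬ AeTrajAux.Dd x y j M n ω := by
    intro x y hxy M
    by_contra hcon
    push_neg at hcon
    apply hnB.2
    refine Set.mem_iUnion.mpr ⟨x, Set.mem_iUnion.mpr ⟨y, Set.mem_iUnion.mpr ⟨hxy,
      Set.mem_iUnion.mpr ⟨M, Set.mem_iInter.mpr fun j => ?_⟩⟩⟩⟩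
    obtain ⟨n, hn⟩ := hcon j
    exact Set.mem_iUnion.mpr ⟨n, hn⟩
  exact AeTrajAux.trajectory_conclusion (fun a b => (P a : S → ℝ≥0∞) b) ω h1 h2
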